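/- Liouville-type maximum principle for S_hyp: Let G be a finite graph with admissible labelling α : E(G) → (0,π), and let ρ, ρ* : V(G) → (−∞,0) be two solutions of the hyperbolic circle pattern equations 2π = 2·Σ_{[v₀,v]∈E} (f_{α}(ρ(v)−ρ(v₀)) − f_{α}(ρ(v)+ρ(v₀))) at every interior vertex. If ρ*(v) ≥ ρ(v) for every boundary vertex v, then ρ*(v) ≥ ρ(v) for all vertices v. -/

import Mathlib

open Real Finset

/-- **Maximum principle in the hyperbolic plane.**
Let `G` be a finite graph with labelling `α : E(G) → (0,π)`, and let
`ρ, ρ* : V(G) → (−∞,0)` be two solutions of the hyperbolic circle pattern equations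
`2π = 2·Σ_{[v₀,v]∈E} (f_α(ρ(v)−ρ(v₀)) − f_α(ρ(v)+ρ(v₀)))` at every interior vertex,
where `f_θ` has derivative `sin θ/(2(cosh x − cos θ))`.  If `ρ*(v) ≥ ρ(v)` on the boundary,
then `ρ*(v) ≥ ρ(v)` everywhere. -/
theorem hyperbolic_circle_pattern_maximum_principle
    {V : Type*} [Fintype V] (G : SimpleGraph V) [DecidableRel G.Adj]
    (boundary : Set V)
    (α : V → V → ℝ) (hαsymm : ∀ u v, α u v = α v u)
    (hα : ∀ u v, G.Adj u v → α u v ∈ Set.Ioo 0 Real.pi)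
    (f : ℝ → ℝ → ℝ)
    (hf : ∀ θ ∈ Set.Ioo 0 Real.pi, ∀ x : ℝ,
      HasDerivAt (f θ) (Real.sin θ / (2 * (Real.cosh x - Real.cos θ))) x)
    (ρ ρs : V → ℝ) (hρ : ∀ v, ρ v < 0) (hρs : ∀ v, ρs v < 0)
    (heq : ∀ v₀, v₀ ∉ boundary →
      2 * Real.pi = 2 * ∑ v ∈ G.neighborFinset v₀,
        (f (α v₀ v) (ρ v - ρ v₀) - f (α v₀ v) (ρ v + ρ v₀)))
    (heqs : ∀ v₀, v₀ ∉ boundary →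
      2 * Real.pi = 2 * ∑ v ∈ G.neighborFinset v₀,
        (f (α v₀ v) (ρs v - ρs v₀) - f (α v₀ v) (ρs v + ρs v₀)))
    (hbd : ∀ v ∈ boundary, ρ v ≤ ρs v) :
    ∀ v, ρ v ≤ ρs v := by
  -- Basic facts about the derivative of `f θ`.
  have hden : ∀ θ ∈ Set.Ioo 0 Real.pi, ∀ x : ℝ, 0 < 2 * (Real.cosh x - Real.cos θ) := by
    intro θ hθ x
    have h1 : Real.cos θ < Real.cos 0 :=
      Real.cos_lt_cos_of_nonneg_of_le_pi le_rfl hθ.2.le hθ.1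
    rw [Real.cos_zero] at h1
    have h2 := Real.one_le_cosh x
    linarith
  have hder_pos : ∀ θ ∈ Set.Ioo 0 Real.pi, ∀ x : ℝ,
      0 < Real.sin θ / (2 * (Real.cosh x - Real.cos θ)) := by
    intro θ hθ x
    exact div_pos (Real.sin_pos_of_pos_of_lt_pi hθ.1 hθ.2) (hden θ hθ x)
  -- `f θ` is strictly monotone.
  have hmono : ∀ θ ∈ Set.Ioo 0 Real.pi, StrictMono (f θ) := by
    intro θ hθ
    apply strictMono_of_deriv_pos
    intro x
    rw [(hf θ hθ x).deriv]
    exact hder_pos θ hθ x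
  -- For `c < 0`, the map `x ↦ f θ (x - c) - f θ (x + c)` is monotone on `Iic 0`.
  have hgmono : ∀ θ ∈ Set.Ioo 0 Real.pi, ∀ c : ℝ, c < 0 →
      MonotoneOn (fun x => f θ (x - c) - f θ (x + c)) (Set.Iic (0:ℝ)) := by
    intro θ hθ c hc
    have hdg : ∀ x : ℝ, HasDerivAt (fun x => f θ (x - c) - f θ (x + c))
        (Real.sin θ / (2 * (Real.cosh (x - c) - Real.cos θ))
          - Real.sin θ / (2 * (Real.cosh (x + c) - Real.cos θ))) x := by
      intro x
      have h1 : HasDerivAt (fun x => f θ (x - c))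
          (Real.sin θ / (2 * (Real.cosh (x - c) - Real.cos θ)) * 1) x :=
        (hf θ hθ (x - c)).comp x ((hasDerivAt_id x).sub_const c)
      have h2 : HasDerivAt (fun x => f θ (x + c))
          (Real.sin θ / (2 * (Real.cosh (x + c) - Real.cos θ)) * 1) x :=
        (hf θ hθ (x + c)).comp x ((hasDerivAt_id x).add_const c)
      have h3 := h1.sub h2
      simp only [mul_one] at h3
      exact h3
    apply monotoneOn_of_deriv_nonneg (convex_Iic 0)
    · exact fun x _ => ((hdg x).differentiableAt).continuousAt.continuousWithinAt
    · exact fun x _ => ((hdg x).differentiableAt).differentiableWithinAt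
    · intro x hx
      rw [interior_Iic] at hx
      rw [(hdg x).deriv]
      have hxc : Real.cosh (x - c) ≤ Real.cosh (x + c) := by
        rw [Real.cosh_le_cosh]
        have hx0 : x < 0 := hx
        have h1 : |x - c| ≤ -x - c := by
          rw [abs_le]; constructor <;> linarith
        have h2 : |x + c| = -x - c := by
          rw [abs_of_neg (by linarith)]; ring
        rw [h2]; exact h1
      have hs := (Real.sin_pos_of_pos_of_lt_pi hθ.1 hθ.2).le
      have d1 := hden θ hθ (x - c)
      have d2 := hden θ hθ (x + c)
      have : Real.sin θ / (2 * (Real.cosh (x + c) - Real.cos θ))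
          ≤ Real.sin θ / (2 * (Real.cosh (x - c) - Real.cos θ)) := by
        apply div_le_div_of_nonneg_left hs d1
        linarith
      linarith
  -- Main argument by contradiction.
  by_contra hcon
  push_neg at hcon
  obtain ⟨w, hw⟩ := hcon
  obtain ⟨v₀, -, hmax⟩ := Finset.exists_max_image Finset.univ (fun v => ρ v - ρs v)
    ⟨w, Finset.mem_univ w⟩
  set M := ρ v₀ - ρs v₀ with hM
  have hMpos : 0 < M := lt_of_lt_of_le (by linarith [hw] : (0:ℝ) < ρ w - ρs w)
    (hmax w (Finset.mem_univ w))
  have hvb : v₀ ∉ boundary := by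
    intro hb
    have := hbd v₀ hb
    linarith
  have e1 := heq v₀ hvb
  have e2 := heqs v₀ hvb
  rcases (G.neighborFinset v₀).eq_empty_or_nonempty with hne | hne
  · rw [hne, Finset.sum_empty] at e1
    have := Real.pi_pos
    linarith
  · have hsum : ∑ v ∈ G.neighborFinset v₀,
        (f (α v₀ v) (ρ v - ρ v₀) - f (α v₀ v) (ρ v + ρ v₀))
        < ∑ v ∈ G.neighborFinset v₀,
        (f (α v₀ v) (ρs v - ρs v₀) - f (α v₀ v) (ρs v + ρs v₀)) := by
      apply Finset.sum_lt_sum_of_nonempty hne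
      intro v hv
      have hadj : G.Adj v₀ v := (G.mem_neighborFinset v₀ v).1 hv
      have hθ := hα v₀ v hadj
      set θ := α v₀ v
      -- Step 1: strict monotonicity of f θ in the second argument.
      have step1 : f θ (ρ v - ρ v₀) - f θ (ρ v + ρ v₀)
          < f θ ((ρ v - M) - ρs v₀) - f θ ((ρ v - M) + ρs v₀) := by
        have e3 : (ρ v - M) - ρs v₀ = ρ v - ρ v₀ := by rw [hM]; ring
        have e4 : (ρ v - M) + ρs v₀ = ρ v + ρ v₀ - 2 * M := by rw [hM]; ring
        rw [e3, e4]
        have := hmono θ hθ (show ρ v + ρ v₀ - 2 * M < ρ v + ρ v₀ by linarith)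
        linarith
      -- Step 2: monotonicity in x on Iic 0.
      have step2 : f θ ((ρ v - M) - ρs v₀) - f θ ((ρ v - M) + ρs v₀)
          ≤ f θ (ρs v - ρs v₀) - f θ (ρs v + ρs v₀) := by
        have h1 : ρ v - M ≤ ρs v := by
          have := hmax v (Finset.mem_univ v); linarith
        have h2 : ρ v - M ∈ Set.Iic (0:ℝ) := by
          have := hρs v; simp only [Set.mem_Iic]; linarith
        have h3 : ρs v ∈ Set.Iic (0:ℝ) := (hρs v).le
        exact hgmono θ hθ (ρs v₀) (hρs v₀) h2 h3 h1
      linarith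
    linarith
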